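/- Let (Ω, 𝒜, μ) be a σ-finite measure space, u ∈ L^1(Ω), and K ∈ (0, μ(Ω)). Then there exists A ∈ 𝒜 with μ(A) ≤ K such that |u|_K = ∫_A |u| dμ, i.e., the supremum in the definition of the largest-K-norm is attained (even if μ has atoms). -/

import Mathlib

open MeasureTheory Set Filter Topology
open scoped ENNReal

/-- The largest-K-norm: `|u|_K = sup { ∫_B |u| dμ : B measurable, μ(B) ≤ K }`. -/
noncomputable def largestK {Ω : Type*} [MeasurableSpace Ω] (μ : Measure Ω) (K : ℝ≥0∞)
    (u : Ω → ℝ) : ℝ :=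
  sSup {r : ℝ | ∃ B : Set Ω, MeasurableSet B ∧ μ B ≤ K ∧ r = ∫ x in B, |u x| ∂μ}

namespace Stmt14

variable {Ω : Type*} [MeasurableSpace Ω]

/-- An atom of a measure. -/
def Atom (μ : Measure Ω) (A : Set Ω) : Prop :=
  MeasurableSet A ∧ 0 < μ A ∧ ∀ B, B ⊆ A → MeasurableSet B → μ B = 0 ∨ μ B = μ A

/-- No atom of `μ` is contained in `S`. -/
def NoAtomIn (μ : Measure Ω) (S : Set Ω) : Prop := ∀ A, A ⊆ S → ¬ Atom μ A

theorem NoAtomIn.mono {μ : Measure Ω} {S T : Set Ω} (h : NoAtomIn μ S) (hTS : T ⊆ S) :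
    NoAtomIn μ T := fun A hA => h A (hA.trans hTS)

theorem finite_piece {μ : Measure Ω} [SigmaFinite μ] {S : Set Ω} (hSm : MeasurableSet S)
    (hS : μ S ≠ 0) :
    ∃ T, T ⊆ S ∧ MeasurableSet T ∧ 0 < μ T ∧ μ T < ∞ := by
  by_contra h
  push_neg at h
  apply hS
  have hcover : S ⊆ ⋃ n, S ∩ spanningSets μ n := by
    rw [← inter_iUnion, iUnion_spanningSets, inter_univ]
  have : ∀ n, μ (S ∩ spanningSets μ n) = 0 := by
    intro n
    by_contra hn
    have hTfin : μ (S ∩ spanningSets μ n) < ∞ :=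
      lt_of_le_of_lt (measure_mono inter_subset_right) (measure_spanningSets_lt_top μ n)
    have := h (S ∩ spanningSets μ n) inter_subset_left (hSm.inter (measurableSet_spanningSets μ n)) (pos_iff_ne_zero.2 hn)
    exact absurd hTfin (not_lt.2 this)
  refine le_antisymm ?_ zero_le
  calc μ S ≤ μ (⋃ n, S ∩ spanningSets μ n) := measure_mono hcover
  _ ≤ ∑' n, μ (S ∩ spanningSets μ n) := measure_iUnion_le _
  _ = 0 := by simp [this]

theorem Atom.lt_top {μ : Measure Ω} [SigmaFinite μ] {A : Set Ω} (hA : Atom μ A) : μ A < ∞ := by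
  obtain ⟨T, hTA, hTm, hT0, hTfin⟩ := finite_piece hA.1 hA.2.1.ne'
  rcases hA.2.2 T hTA hTm with h | h
  · exact absurd h hT0.ne'
  · exact h ▸ hTfin

theorem small_subset {μ : Measure Ω} [SigmaFinite μ] {S : Set Ω} (hS : NoAtomIn μ S)
    (hSm : MeasurableSet S) (hpos : μ S ≠ 0) {ε : ℝ≥0∞} (hε : ε ≠ 0) :
    ∃ T, T ⊆ S ∧ MeasurableSet T ∧ 0 < μ T ∧ μ T < ε := by
  obtain ⟨T₀, hT₀S, hT₀m, hT₀0, hT₀fin⟩ := finite_piece hSm hpos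
  set V : Set ℝ≥0∞ := {v | ∃ T, T ⊆ T₀ ∧ MeasurableSet T ∧ μ T = v ∧ v ≠ 0} with hV
  have hmem : μ T₀ ∈ V := ⟨T₀, subset_rfl, hT₀m, rfl, hT₀0.ne'⟩
  set ι := sInf V with hι
  rcases lt_or_ge ι ε with hlt | hle
  · obtain ⟨v, ⟨T, hTsub, hTm, rfl, hv0⟩, hvε⟩ := sInf_lt_iff.1 hlt
    exact ⟨T, hTsub.trans hT₀S, hTm, pos_iff_ne_zero.2 hv0, hvε⟩
  · exfalso
    have hι0 : ι ≠ 0 := fun h => hε (le_antisymm (h ▸ hle) zero_le)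
    have hιtop : ι < ∞ := lt_of_le_of_lt (sInf_le hmem) hT₀fin
    have h2 : ι < 2 * ι := by
      rw [two_mul]
      exact ENNReal.lt_add_right hιtop.ne hι0
    obtain ⟨v, ⟨C, hCsub, hCm, rfl, hv0⟩, hvlt⟩ := sInf_lt_iff.1 h2
    have hCS : C ⊆ S := hCsub.trans hT₀S
    have hCfin : μ C < ∞ := hvlt.trans (ENNReal.mul_lt_top (by norm_num) hιtop)
    have hnotatom := hS C hCS
    have : ∃ B, B ⊆ C ∧ MeasurableSet B ∧ μ B ≠ 0 ∧ μ B ≠ μ C := by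
      by_contra hcon
      push_neg at hcon
      exact hnotatom ⟨hCm, pos_iff_ne_zero.2 hv0, fun B hB hBm => by
        rcases eq_or_ne (μ B) 0 with h | h
        · exact Or.inl h
        · exact Or.inr (hcon B hB hBm h)⟩
    obtain ⟨B, hBC, hBm, hB0, hBne⟩ := this
    have hBι : ι ≤ μ B := sInf_le ⟨B, hBC.trans hCsub, hBm, rfl, hB0⟩
    have hsplit : μ (C ∩ B) + μ (C \ B) = μ C := measure_inter_add_diff C hBm
    rw [inter_eq_self_of_subset_right hBC] at hsplit
    have hCB0 : μ (C \ B) ≠ 0 := by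
      intro h
      rw [h, add_zero] at hsplit
      exact hBne hsplit
    have hCBι : ι ≤ μ (C \ B) :=
      sInf_le ⟨C \ B, (diff_subset).trans hCsub, hCm.diff hBm, rfl, hCB0⟩
    have : 2 * ι ≤ μ C := by
      rw [two_mul, ← hsplit]
      exact add_le_add hBι hCBι
    exact absurd (lt_of_le_of_lt this hvlt) (lt_irrefl _)


theorem sierpinski {μ : Measure Ω} [SigmaFinite μ] {S : Set Ω} (hS : NoAtomIn μ S)
    (hSm : MeasurableSet S) {r : ℝ≥0∞} (hr : r ≤ μ S) (hrtop : r ≠ ∞) :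
    ∃ T, T ⊆ S ∧ MeasurableSet T ∧ μ T = r := by
  classical
  have step : ∀ F : Set Ω, F ⊆ S → MeasurableSet F → μ F ≤ r →
      ∃ B, B ⊆ S \ F ∧ MeasurableSet B ∧ μ F + μ B ≤ r ∧
        ∀ B', B' ⊆ S \ F → MeasurableSet B' → μ F + μ B' ≤ r → μ B' ≤ 2 * μ B := by
    intro F hFS hFm hFr
    set c := sSup {m | ∃ B, B ⊆ S \ F ∧ MeasurableSet B ∧ μ F + μ B ≤ r ∧ μ B = m} with hc
    rcases eq_or_ne c 0 with h0 | h0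
    · refine ⟨∅, empty_subset _, MeasurableSet.empty, by simpa using hFr, ?_⟩
      intro B' h1 h2 h3
      have hle : μ B' ≤ c := le_sSup ⟨B', h1, h2, h3, rfl⟩
      simp [h0] at hle
      simp [hle]
    · have hcr : c ≤ r := sSup_le (by
        rintro m ⟨B, h1, h2, h3, rfl⟩
        exact le_trans le_add_self h3)
      have hhalf : c / 2 < c :=
        ENNReal.half_lt_self h0 (hcr.trans_lt (lt_top_iff_ne_top.2 hrtop)).ne
      obtain ⟨m, ⟨B, h1, h2, h3, rfl⟩, hm⟩ := lt_sSup_iff.1 hhalf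
      refine ⟨B, h1, h2, h3, ?_⟩
      intro B' h1' h2' h3'
      calc μ B' ≤ c := le_sSup ⟨B', h1', h2', h3', rfl⟩
        _ = 2 * (c / 2) := (ENNReal.mul_div_cancel two_ne_zero ENNReal.ofNat_ne_top).symm
        _ ≤ 2 * μ B := mul_le_mul_right hm.le 2
  have step' : ∀ F : Set Ω, ∃ B : Set Ω, F ⊆ S → MeasurableSet F → μ F ≤ r →
      B ⊆ S \ F ∧ MeasurableSet B ∧ μ F + μ B ≤ r ∧
        ∀ B', B' ⊆ S \ F → MeasurableSet B' → μ F + μ B' ≤ r → μ B' ≤ 2 * μ B := by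
    intro F
    by_cases h : F ⊆ S ∧ MeasurableSet F ∧ μ F ≤ r
    · exact ⟨(step F h.1 h.2.1 h.2.2).choose, fun _ _ _ => (step F h.1 h.2.1 h.2.2).choose_spec⟩
    · exact ⟨∅, fun h1 h2 h3 => absurd ⟨h1, h2, h3⟩ h⟩
  choose pick hpick using step'
  set Fs : ℕ → Set Ω := fun n => (fun F => F ∪ pick F)^[n] ∅ with hFs
  have hFsucc : ∀ n, Fs (n + 1) = Fs n ∪ pick (Fs n) := by
    intro n
    rw [hFs]
    exact Function.iterate_succ_apply' _ n ∅
  have hInv : ∀ n, Fs n ⊆ S ∧ MeasurableSet (Fs n) ∧ μ (Fs n) ≤ r := by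
    intro n
    induction n with
    | zero =>
      have h0 : Fs 0 = ∅ := rfl
      exact ⟨h0 ▸ empty_subset _, h0 ▸ MeasurableSet.empty, by rw [h0]; simp⟩
    | succ n ih =>
      obtain ⟨h1, h2, h3, _⟩ := hpick (Fs n) ih.1 ih.2.1 ih.2.2
      rw [hFsucc n]
      exact ⟨union_subset ih.1 (h1.trans diff_subset), ih.2.1.union h2,
        le_trans (measure_union_le _ _) h3⟩
  have hadd : ∀ n, μ (Fs (n + 1)) = μ (Fs n) + μ (pick (Fs n)) := by
    intro n
    obtain ⟨h1, h2, h3, _⟩ := hpick (Fs n) (hInv n).1 (hInv n).2.1 (hInv n).2.2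
    have hd : Disjoint (Fs n) (pick (Fs n)) :=
      Set.disjoint_left.2 fun x hxF hxp => (h1 hxp).2 hxF
    rw [hFsucc n, measure_union hd h2]
  have hmono : Monotone Fs := monotone_nat_of_le_succ fun n => by
    rw [hFsucc n]; exact subset_union_left
  set T := ⋃ n, Fs n with hT
  have hTS : T ⊆ S := iUnion_subset fun n => (hInv n).1
  have hTm : MeasurableSet T := MeasurableSet.iUnion fun n => (hInv n).2.1
  have hTμ : μ T = ⨆ n, μ (Fs n) := hmono.measure_iUnion
  have hTr : μ T ≤ r := by
    rw [hTμ]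
    exact iSup_le fun n => (hInv n).2.2
  rcases eq_or_lt_of_le hTr with heq | hlt
  · exact ⟨T, hTS, hTm, heq⟩
  exfalso
  have hγ : r - μ T ≠ 0 := (tsub_pos_iff_lt.2 hlt).ne'
  have hSdT : μ (S \ T) ≠ 0 := by
    intro h
    have : μ S ≤ μ T + μ (S \ T) :=
      le_trans (measure_mono (by intro x hx; by_cases hxT : x ∈ T; exacts [Or.inl hxT, Or.inr ⟨hx, hxT⟩])) (measure_union_le _ _)
    rw [h, add_zero] at this
    exact absurd (lt_of_lt_of_le hlt (hr.trans this)) (lt_irrefl _)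
  obtain ⟨T', hT'sub, hT'm, hT'0, hT'lt⟩ :=
    small_subset (fun A hA => hS A (hA.trans (diff_subset.trans (subset_refl S)))) (hSm.diff hTm) hSdT hγ
  set q := μ T' / 2 with hq
  have hq0 : q ≠ 0 := by
    rw [hq]
    simp [ENNReal.div_eq_zero_iff, hT'0.ne']
  have hqfin : q ≠ ∞ := by
    rw [hq]
    exact (ENNReal.div_lt_top (hT'lt.trans_le (le_trans (tsub_le_self) le_top)).ne two_ne_zero).ne
  have hFnT : ∀ n, Fs n ⊆ T := fun n x hx => mem_iUnion.2 ⟨n, hx⟩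
  have hbound : ∀ n, μ T' ≤ 2 * μ (pick (Fs n)) := by
    intro n
    have h4 := (hpick (Fs n) (hInv n).1 (hInv n).2.1 (hInv n).2.2).2.2.2
    refine h4 T' (hT'sub.trans (diff_subset_diff_right (hFnT n))) hT'm ?_
    calc μ (Fs n) + μ T' ≤ μ T + (r - μ T) :=
          add_le_add (measure_mono (hFnT n)) hT'lt.le
      _ = r := add_tsub_cancel_of_le hlt.le
  have hgrow : ∀ n : ℕ, (n : ℝ≥0∞) * q ≤ μ (Fs n) := by
    intro n
    induction n with
    | zero => simp
    | succ n ih =>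
      have hpq : q ≤ μ (pick (Fs n)) := by
        have := hbound n
        rw [hq, ENNReal.div_le_iff_le_mul (Or.inl two_ne_zero) (Or.inl ENNReal.ofNat_ne_top)]
        rwa [mul_comm]
      rw [hadd n]
      push_cast
      rw [add_mul, one_mul]
      exact add_le_add ih hpq
  obtain ⟨n, hn⟩ := ENNReal.exists_nat_gt (ENNReal.div_lt_top hrtop hq0).ne
  have : r < (n : ℝ≥0∞) * q := by
    rw [← ENNReal.div_lt_iff (Or.inl hq0) (Or.inl hqfin)]
    exact hn
  exact absurd (lt_of_lt_of_le this (le_trans (hgrow n) ((hInv n).2.2))) (lt_irrefl _)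

theorem finite_decomp {μ : Measure Ω} {S : Set Ω} (hSm : MeasurableSet S) (hSfin : μ S ≠ ∞) :
    ∃ A : ℕ → Set Ω, (∀ i, MeasurableSet (A i)) ∧ (∀ i, A i ⊆ S) ∧
      Pairwise (Function.onFun Disjoint A) ∧ (∀ i, A i = ∅ ∨ Atom μ (A i)) ∧
      NoAtomIn μ (S \ ⋃ i, A i) := by
  classical
  have step : ∀ U : Set Ω, ∃ B, B ⊆ S \ U ∧ MeasurableSet B ∧ (B = ∅ ∨ Atom μ B) ∧
      ∀ A', A' ⊆ S \ U → Atom μ A' → μ A' ≤ 2 * μ B := by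
    intro U
    by_cases h : ∃ A', A' ⊆ S \ U ∧ Atom μ A'
    · set c := sSup {m | ∃ A', A' ⊆ S \ U ∧ Atom μ A' ∧ μ A' = m} with hc
      obtain ⟨A₀, hA₀sub, hA₀⟩ := h
      have hc0 : c ≠ 0 := by
        refine fun h0 => hA₀.2.1.ne' ?_
        have : μ A₀ ≤ c := le_sSup ⟨A₀, hA₀sub, hA₀, rfl⟩
        exact le_antisymm (h0 ▸ this) zero_le |>.symm ▸ rfl
      have hcfin : c ≠ ∞ := by
        refine (lt_of_le_of_lt (sSup_le ?_) (lt_top_iff_ne_top.2 hSfin)).ne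
        rintro m ⟨A', hA'sub, hA', rfl⟩
        exact measure_mono (hA'sub.trans diff_subset)
      have hhalf : c / 2 < c := ENNReal.half_lt_self hc0 hcfin
      obtain ⟨m, ⟨B, hBsub, hB, rfl⟩, hm⟩ := lt_sSup_iff.1 hhalf
      refine ⟨B, hBsub, hB.1, Or.inr hB, ?_⟩
      intro A' hA'sub hA'
      calc μ A' ≤ c := le_sSup ⟨A', hA'sub, hA', rfl⟩
        _ = 2 * (c / 2) := (ENNReal.mul_div_cancel two_ne_zero ENNReal.ofNat_ne_top).symm
        _ ≤ 2 * μ B := mul_le_mul_right hm.le 2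
    · exact ⟨∅, empty_subset _, MeasurableSet.empty, Or.inl rfl,
        fun A' h1 h2 => absurd ⟨A', h1, h2⟩ h⟩
  choose pick hsub hmeas hatom hbig using step
  set Us : ℕ → Set Ω := fun n => (fun U => U ∪ pick U)^[n] ∅ with hUs
  have hU0 : Us 0 = ∅ := rfl
  have hUsucc : ∀ n, Us (n + 1) = Us n ∪ pick (Us n) := by
    intro n
    rw [hUs]
    exact Function.iterate_succ_apply' _ n ∅
  set A : ℕ → Set Ω := fun n => pick (Us n) with hA
  have hAUs : ∀ n, Us n = ⋃ k, ⋃ (_ : k < n), A k := by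
    intro n
    induction n with
    | zero => simp [hU0]
    | succ n ih =>
      have hsplit : (⋃ k, ⋃ (_ : k < n + 1), A k) = (⋃ k, ⋃ (_ : k < n), A k) ∪ A n := by
        ext x
        simp only [mem_union, mem_iUnion, Nat.lt_succ_iff_lt_or_eq]
        constructor
        · rintro ⟨k, hk | rfl, hx⟩
          exacts [Or.inl ⟨k, hk, hx⟩, Or.inr hx]
        · rintro (⟨k, hk, hx⟩ | hx)
          exacts [⟨k, Or.inl hk, hx⟩, ⟨n, Or.inr rfl, hx⟩]
      rw [hUsucc n, hsplit, ← ih]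
  have hUm : ∀ n, MeasurableSet (Us n) := by
    intro n
    induction n with
    | zero => exact hU0 ▸ MeasurableSet.empty
    | succ n ih => exact (hUsucc n) ▸ ih.union (hmeas _)
  have hUsub : ∀ n, Us n ⊆ S := by
    intro n
    induction n with
    | zero => exact hU0 ▸ empty_subset _
    | succ n ih => exact (hUsucc n) ▸ union_subset ih ((hsub _).trans diff_subset)
  have hUmono : Monotone Us := monotone_nat_of_le_succ fun n => by
    rw [hUsucc n]; exact subset_union_left
  have hdisj : Pairwise (Function.onFun Disjoint A) := by
    have key : ∀ m n, m < n → Disjoint (A m) (A n) := by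
      intro m n hmn
      have h1 : A m ⊆ Us n := by
        rw [hAUs n]
        exact fun x hx => mem_iUnion.2 ⟨m, mem_iUnion.2 ⟨hmn, hx⟩⟩
      have h2 : A n ⊆ S \ Us n := hsub (Us n)
      exact Set.disjoint_left.2 fun x hxm hxn => (h2 hxn).2 (h1 hxm)
    intro m n hmn
    rcases lt_or_gt_of_ne hmn with h | h
    exacts [key m n h, (key n m h).symm]
  refine ⟨A, fun i => hmeas _, fun i => (hsub _).trans diff_subset, hdisj, fun i => hatom _, ?_⟩
  intro A' hA'sub hA'
  have hA'Un : ∀ n, A' ⊆ S \ Us n := by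
    intro n
    refine hA'sub.trans (diff_subset_diff_right ?_)
    rw [hAUs n]
    exact iUnion_subset fun k => iUnion_subset fun _ => subset_iUnion A k
  have hAn : ∀ n, μ A' ≤ 2 * μ (A n) := fun n => hbig (Us n) A' (hA'Un n) hA'
  set q := μ A' / 2 with hq
  have hq0 : q ≠ 0 := by
    rw [hq]
    simp [ENNReal.div_eq_zero_iff, hA'.2.1.ne']
  have hqA : ∀ n, q ≤ μ (A n) := by
    intro n
    rw [hq, ENNReal.div_le_iff_le_mul (Or.inl two_ne_zero) (Or.inl ENNReal.ofNat_ne_top), mul_comm]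
    exact hAn n
  have hadd : ∀ n, μ (Us (n + 1)) = μ (Us n) + μ (A n) := by
    intro n
    have hd : Disjoint (Us n) (A n) :=
      Set.disjoint_left.2 fun x hxU hxA => (hsub (Us n) hxA).2 hxU
    rw [hUsucc n, measure_union hd (hmeas _)]
  have hgrow : ∀ n : ℕ, (n : ℝ≥0∞) * q ≤ μ (Us n) := by
    intro n
    induction n with
    | zero => simp
    | succ n ih =>
      rw [hadd n]
      push_cast
      rw [add_mul, one_mul]
      exact add_le_add ih (hqA n)
  have hqfin : q ≠ ∞ := by
    rw [hq]
    refine (ENNReal.div_lt_top ?_ two_ne_zero).ne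
    exact (lt_of_le_of_lt (measure_mono (hA'sub.trans diff_subset)) (lt_top_iff_ne_top.2 hSfin)).ne
  obtain ⟨n, hn⟩ := ENNReal.exists_nat_gt (ENNReal.div_lt_top hSfin hq0).ne
  have : μ S < (n : ℝ≥0∞) * q := by
    rw [← ENNReal.div_lt_iff (Or.inl hq0) (Or.inl hqfin)]
    exact hn
  exact absurd (lt_of_lt_of_le this ((hgrow n).trans (measure_mono (hUsub n)))) (lt_irrefl _)

theorem sigma_decomp (μ : Measure Ω) [SigmaFinite μ] :
    ∃ A : ℕ → Set Ω, (∀ i, MeasurableSet (A i)) ∧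
      Pairwise (Function.onFun Disjoint A) ∧ (∀ i, A i = ∅ ∨ Atom μ (A i)) ∧
      NoAtomIn μ ((⋃ i, A i)ᶜ) := by
  classical
  set W : ℕ → Set Ω := disjointed (spanningSets μ) with hW
  have hWm : ∀ j, MeasurableSet (W j) := MeasurableSet.disjointed (measurableSet_spanningSets μ)
  have hWfin : ∀ j, μ (W j) ≠ ∞ :=
    fun j => (lt_of_le_of_lt (measure_mono (disjointed_subset _ j))
      (measure_spanningSets_lt_top μ j)).ne
  have hWunion : ⋃ j, W j = univ := by
    rw [hW, iUnion_disjointed, iUnion_spanningSets]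
  choose B hBm hBsub hBdisj hBatom hBnoatom using
    fun j => finite_decomp (μ := μ) (hWm j) (hWfin j)
  set e : ℕ ≃ ℕ × ℕ := (Denumerable.eqv (ℕ × ℕ)).symm with he
  refine ⟨fun i => B (e i).1 (e i).2, fun i => hBm _ _, ?_, fun i => hBatom _ _, ?_⟩
  · intro i i' hne
    have hpairne : e i ≠ e i' := fun h => hne (e.injective h)
    rcases eq_or_ne (e i).1 (e i').1 with h1 | h1
    · have h2 : (e i).2 ≠ (e i').2 := fun h2 => hpairne (Prod.ext h1 h2)
      have := hBdisj (e i).1 h2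
      show Disjoint (B (e i).1 (e i).2) (B (e i').1 (e i').2)
      rw [← h1]
      exact this
    · have hd : Disjoint (W (e i).1) (W (e i').1) := disjoint_disjointed _ h1
      exact hd.mono (hBsub _ _) (hBsub _ _)
  · intro A' hA'sub hA'
    have hcov : μ A' ≤ ∑' j, μ (A' ∩ W j) := by
      calc μ A' = μ (⋃ j, A' ∩ W j) := by rw [← inter_iUnion, hWunion, inter_univ]
        _ ≤ ∑' j, μ (A' ∩ W j) := measure_iUnion_le _
    have hex : ∃ j, μ (A' ∩ W j) ≠ 0 := by
      by_contra hcon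
      push_neg at hcon
      rw [ENNReal.tsum_eq_zero.2 hcon] at hcov
      exact hA'.2.1.ne' (le_antisymm hcov zero_le)
    obtain ⟨j, hj⟩ := hex
    have hfull : μ (A' ∩ W j) = μ A' := by
      rcases hA'.2.2 (A' ∩ W j) inter_subset_left (hA'.1.inter (hWm j)) with h | h
      exacts [absurd h hj, h]
    have hatom'' : Atom μ (A' ∩ W j) := by
      refine ⟨hA'.1.inter (hWm j), hfull ▸ hA'.2.1, ?_⟩
      intro C hC hCm
      rcases hA'.2.2 C (hC.trans inter_subset_left) hCm with h | h
      exacts [Or.inl h, Or.inr (h.trans hfull.symm)]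
    refine hBnoatom j (A' ∩ W j) ?_ hatom''
    intro x hx
    refine ⟨hx.2, ?_⟩
    intro hxU
    obtain ⟨k, hk⟩ := mem_iUnion.1 hxU
    have : x ∈ (⋃ i, B (e i).1 (e i).2) := by
      refine mem_iUnion.2 ⟨e.symm (j, k), ?_⟩
      simp only [Equiv.apply_symm_apply]
      exact hk
    exact (hA'sub hx.1) this

theorem abscont {μ : Measure Ω} {g : Ω → ℝ≥0∞} (hgm : Measurable g) (hgi : ∫⁻ x, g x ∂μ ≠ ∞)
    {ε : ℝ≥0∞} (hε : ε ≠ 0) :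
    ∃ δ : ℝ≥0∞, δ ≠ 0 ∧ ∀ Z, MeasurableSet Z → μ Z ≤ δ → μ.withDensity g Z ≤ ε := by
  by_contra hcon
  push_neg at hcon
  set ν := μ.withDensity g with hν
  have hνfin : IsFiniteMeasure ν := isFiniteMeasure_withDensity hgi
  have hδ : ∀ n : ℕ, (2⁻¹ : ℝ≥0∞) ^ n ≠ 0 := fun n =>
    pow_ne_zero n (ENNReal.inv_ne_zero.2 ENNReal.ofNat_ne_top)
  choose Z hZm hZμ hZν using fun n : ℕ => hcon (2⁻¹ ^ n) (hδ n)
  have htsum : ∑' n, μ (Z n) ≠ ∞ := by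
    refine (lt_of_le_of_lt (ENNReal.tsum_le_tsum fun n => hZμ n) ?_).ne
    rw [ENNReal.tsum_geometric, ENNReal.one_sub_inv_two]
    simp
  have hμL : μ (limsup Z atTop) = 0 := measure_limsup_atTop_eq_zero htsum
  have hνL : ν (limsup Z atTop) = 0 := withDensity_absolutelyContinuous μ g hμL
  have hL : limsup Z atTop = ⋂ n, ⋃ k, ⋃ (_ : n ≤ k), Z k := limsup_eq_iInf_iSup_of_nat
  have hlower : ε ≤ ν (limsup Z atTop) := by
    rw [hL]
    have hU : ∀ n : ℕ, NullMeasurableSet (⋃ k, ⋃ (_ : n ≤ k), Z k) ν :=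
      fun n => (MeasurableSet.iUnion fun k => MeasurableSet.iUnion fun _ => hZm k).nullMeasurableSet
    have hanti : Antitone fun n : ℕ => ⋃ k, ⋃ (_ : n ≤ k), Z k := by
      intro m n hmn
      exact iUnion_mono fun k => iUnion_subset fun h => subset_iUnion_of_subset (hmn.trans h) (by simp)
    have := Directed.measure_iInter (μ := ν) hU hanti.directed_ge ⟨0, measure_ne_top ν _⟩
    rw [this]
    refine le_iInf fun n => ?_
    exact le_trans (hZν n).le (measure_mono fun x hx => mem_iUnion.2 ⟨n, mem_iUnion.2 ⟨le_rfl, hx⟩⟩)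
  rw [hνL] at hlower
  exact hε (le_antisymm hlower zero_le)

theorem nonatomic_opt {μ : Measure Ω} [SigmaFinite μ] {g : Ω → ℝ≥0∞} (hgm : Measurable g)
    (hgi : ∫⁻ x, g x ∂μ ≠ ∞)
    {N : Set Ω} (hN : NoAtomIn μ N) (hNm : MeasurableSet N) {x : ℝ≥0∞} (hx : x ≠ ∞) :
    ∃ C, C ⊆ N ∧ MeasurableSet C ∧ μ C ≤ x ∧
      ∀ B, B ⊆ N → MeasurableSet B → μ B ≤ x → μ.withDensity g B ≤ μ.withDensity g C := by
  classical
  set ν := μ.withDensity g with hν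
  have hνap : ∀ Z : Set Ω, MeasurableSet Z → ν Z = ∫⁻ y in Z, g y ∂μ :=
    fun Z hZ => withDensity_apply g hZ
  rcases eq_or_ne x 0 with rfl | hx0
  · refine ⟨∅, empty_subset _, MeasurableSet.empty, by simp, ?_⟩
    intro B hBN hBm hBx
    have h0 : μ B = 0 := le_antisymm hBx zero_le
    rw [hν, withDensity_absolutelyContinuous μ g h0]
    exact zero_le
  set Eset : ℝ≥0∞ → Set Ω := fun t => N ∩ {y | t < g y} with hEsetdef
  have hEm : ∀ t, MeasurableSet (Eset t) :=
    fun t => hNm.inter (measurableSet_lt measurable_const hgm)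
  have hEmono : ∀ {t t' : ℝ≥0∞}, t ≤ t' → Eset t' ⊆ Eset t :=
    fun {t t'} h y hy => ⟨hy.1, lt_of_le_of_lt h hy.2⟩
  have hMarkov : ∀ t : ℝ≥0∞, t ≠ 0 → t ≠ ∞ → μ (Eset t) ≠ ∞ := by
    intro t ht0 htop
    have h1 : Eset t ⊆ {y | t ≤ g y} := fun y hy => show t ≤ g y from hy.2.le
    have h2 := meas_ge_le_lintegral_div (μ := μ) hgm.aemeasurable ht0 htop
    exact (lt_of_le_of_lt (measure_mono h1)
      (lt_of_le_of_lt h2 (ENNReal.div_lt_top hgi ht0))).ne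
  set S := {t : ℝ≥0∞ | μ (Eset t) ≤ x} with hSdef
  have hSne : ∃ t : ℝ≥0∞, t ≠ ∞ ∧ t ∈ S := by
    have hzero : μ (N ∩ {y | g y = ∞}) = 0 := by
      have hae := ae_lt_top hgm hgi
      rw [ae_iff] at hae
      refine le_antisymm (le_trans (measure_mono ?_) hae.le) zero_le
      intro y hy
      simp only [mem_setOf_eq, not_lt, top_le_iff]
      exact hy.2
    have hinter : ⋂ n : ℕ, Eset n = N ∩ {y | g y = ∞} := by
      ext y
      simp only [mem_iInter, hEsetdef, mem_inter_iff, mem_setOf_eq]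
      constructor
      · intro h
        refine ⟨(h 0).1, ?_⟩
        by_contra hne
        obtain ⟨n, hn⟩ := ENNReal.exists_nat_gt hne
        exact absurd (h n).2 (not_lt.2 hn.le)
      · rintro ⟨h1, h2⟩ n
        exact ⟨h1, by rw [h2]; exact ENNReal.natCast_lt_top n⟩
    have hanti : Antitone fun n : ℕ => Eset n := fun m n hmn =>
      hEmono (by exact_mod_cast hmn)
    have htend : Tendsto (fun n : ℕ => μ (Eset n)) atTop (𝓝 (μ (⋂ n : ℕ, Eset n))) := by
      refine tendsto_measure_iInter_atTop (fun n => (hEm _).nullMeasurableSet) hanti ?_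
      exact ⟨1, hMarkov ((1:ℕ):ℝ≥0∞) (by simp) (by simp)⟩
    rw [hinter, hzero] at htend
    have hev : ∀ᶠ n : ℕ in atTop, μ (Eset n) < x :=
      htend.eventually_lt_const (pos_iff_ne_zero.2 hx0)
    obtain ⟨n, hn⟩ := hev.exists
    exact ⟨n, ENNReal.natCast_ne_top n, hn.le⟩
  obtain ⟨t₁, ht₁top, ht₁S⟩ := hSne
  set t₀ := sInf S with ht₀def
  have ht₀top : t₀ ≠ ∞ := ((sInf_le ht₁S).trans_lt (lt_top_iff_ne_top.2 ht₁top)).ne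
  set E := Eset t₀ with hEdef
  have hEsubN : E ⊆ N := inter_subset_left
  have hEx : μ E ≤ x := by
    set u : ℕ → Set Ω := fun n => Eset (t₀ + ((n : ℝ≥0∞) + 1)⁻¹) with hu
    have huE : E = ⋃ n, u n := by
      apply Subset.antisymm
      · intro y hy
        obtain ⟨c, hc1, hc2⟩ := exists_between (show t₀ < g y from hy.2)
        have hcne : c ≠ ∞ := ne_top_of_lt hc2
        have hd0 : c - t₀ ≠ 0 := (tsub_pos_of_lt hc1).ne'
        obtain ⟨n, hn⟩ := ENNReal.exists_inv_nat_lt hd0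
        refine mem_iUnion.2 ⟨n, hy.1, ?_⟩
        have h1 : ((n : ℝ≥0∞) + 1)⁻¹ ≤ ((n : ℝ≥0∞))⁻¹ :=
          ENNReal.inv_le_inv.2 le_self_add
        calc t₀ + ((n : ℝ≥0∞) + 1)⁻¹ ≤ t₀ + ((n : ℝ≥0∞))⁻¹ := add_le_add_right h1 t₀
          _ < t₀ + (c - t₀) := ENNReal.add_lt_add_left ht₀top hn
          _ = c := add_tsub_cancel_of_le hc1.le
          _ < g y := hc2
      · refine iUnion_subset fun n => hEmono le_self_add
    have humono : Monotone u := by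
      intro m n hmn
      refine hEmono (add_le_add_right (ENNReal.inv_le_inv.2 (add_le_add_left ?_ 1)) t₀)
      exact_mod_cast hmn
    rw [huE, humono.measure_iUnion]
    refine iSup_le fun n => ?_
    have hlt : t₀ < t₀ + ((n : ℝ≥0∞) + 1)⁻¹ := by
      exact ENNReal.lt_add_right ht₀top
        (ENNReal.inv_ne_zero.2 (ENNReal.add_ne_top.2 ⟨ENNReal.natCast_ne_top n, ENNReal.one_ne_top⟩))
    obtain ⟨s', hs'S, hs'lt⟩ := sInf_lt_iff.1 hlt
    exact le_trans (measure_mono (hEmono hs'lt.le)) hs'S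
  set L := N ∩ {y | g y = t₀} with hLdef
  have hLm : MeasurableSet L := hNm.inter (hgm (measurableSet_singleton t₀))
  have hLsubN : L ⊆ N := inter_subset_left
  set c := x - μ E with hcdef
  set r := min c (μ L) with hrdef
  have hrtop : r ≠ ∞ := ((min_le_left _ _).trans tsub_le_self |>.trans_lt
    (lt_top_iff_ne_top.2 hx)).ne
  obtain ⟨F, hFL, hFm, hFr⟩ :=
    sierpinski (hN.mono hLsubN) hLm (min_le_right c (μ L)) hrtop
  set C := E ∪ F with hCdef
  have hCN : C ⊆ N := union_subset hEsubN (hFL.trans hLsubN)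
  have hCm : MeasurableSet C := (hEm t₀).union hFm
  have hCx : μ C ≤ x := by
    calc μ C ≤ μ E + μ F := measure_union_le _ _
      _ ≤ μ E + c := add_le_add_right (hFr ▸ min_le_left c (μ L)) _
      _ = x := add_tsub_cancel_of_le hEx
  refine ⟨C, hCN, hCm, hCx, ?_⟩
  intro B hBN hBm hBx
  set W := N ∩ {y | g y < t₀} with hWdef
  have hWm : MeasurableSet W := hNm.inter (measurableSet_lt hgm measurable_const)
  -- decomposition of B
  have hBdiff : B \ E = (B ∩ L) ∪ (B ∩ W) := by
    ext y
    constructor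
    · rintro ⟨hyB, hyE⟩
      have hyN : y ∈ N := hBN hyB
      rcases lt_trichotomy (g y) t₀ with h | h | h
      · exact Or.inr ⟨hyB, hyN, h⟩
      · exact Or.inl ⟨hyB, hyN, h⟩
      · exact absurd (show y ∈ E from ⟨hyN, h⟩) hyE
    · rintro (⟨hyB, hyN, (h : g y = t₀)⟩ | ⟨hyB, hyN, (h : g y < t₀)⟩)
      · exact ⟨hyB, fun hyE => absurd (show t₀ < g y from hyE.2)
          (by rw [h]; exact lt_irrefl _)⟩
      · exact ⟨hyB, fun hyE => absurd (show t₀ < g y from hyE.2) (not_lt.2 h.le)⟩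
  have hdisjLW : Disjoint (B ∩ L) (B ∩ W) := by
    refine Set.disjoint_left.2 fun y hyL hyW => ?_
    have h1 : g y = t₀ := hyL.2.2
    have h2 : g y < t₀ := hyW.2.2
    rw [h1] at h2
    exact absurd h2 (lt_irrefl _)
  have hdisjEF : Disjoint E F := by
    refine Set.disjoint_left.2 fun y hyE hyF => ?_
    have h1 : g y = t₀ := (hFL hyF).2
    have h2 : t₀ < g y := hyE.2
    rw [h1] at h2
    exact absurd h2 (lt_irrefl _)
  -- the measure decompositions, for any measure
  have hdecomp : ∀ m : Measure Ω, m B = m (B ∩ E) + (m (B ∩ L) + m (B ∩ W)) := by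
    intro m
    rw [← measure_inter_add_diff B (hEm t₀), hBdiff, measure_union hdisjLW (hBm.inter hWm)]
  have hEdecomp : ∀ m : Measure Ω, m E = m (B ∩ E) + m (E \ B) := by
    intro m
    rw [← measure_inter_add_diff E hBm, inter_comm]
  -- key inequality
  have key : ν (B ∩ L) + ν (B ∩ W) ≤ ν (E \ B) + ν F := by
    have hνeq : ∀ Z, Z ⊆ {y | g y = t₀} → MeasurableSet Z → ν Z = t₀ * μ Z := by
      intro Z hZ hZm
      rw [hνap Z hZm, setLIntegral_congr_fun hZm (fun y hy => hZ hy),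
        setLIntegral_const Z t₀]
    have hνW : ν (B ∩ W) ≤ t₀ * μ (B ∩ W) := by
      rw [hνap _ (hBm.inter hWm), ← setLIntegral_const (B ∩ W) t₀]
      exact setLIntegral_mono measurable_const fun y hy => hy.2.2.le
    have hνEB : t₀ * μ (E \ B) ≤ ν (E \ B) := by
      rw [hνap _ ((hEm t₀).diff hBm), ← setLIntegral_const (E \ B) t₀]
      exact setLIntegral_mono hgm fun y hy => hy.1.2.le
    have hνF : ν F = t₀ * μ F := hνeq F (fun y hy => (hFL hy).2) hFm
    have hνBL : ν (B ∩ L) = t₀ * μ (B ∩ L) :=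
      hνeq _ (fun y hy => hy.2.2) (hBm.inter hLm)
    rcases eq_or_ne t₀ 0 with ht₀0 | ht₀0
    · rw [hνBL, ht₀0, zero_mul, zero_add]
      exact le_trans (le_trans hνW (by rw [ht₀0, zero_mul])) zero_le
    · -- in this case μ L ≥ c
      have hcL : c ≤ μ L := by
        have hELset : N ∩ {y | t₀ ≤ g y} = E ∪ L := by
          ext y
          constructor
          · rintro ⟨hyN, (hy : t₀ ≤ g y)⟩
            rcases eq_or_lt_of_le hy with h | h
            exacts [Or.inr ⟨hyN, h.symm⟩, Or.inl ⟨hyN, h⟩]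
          · rintro (⟨hyN, (hy : t₀ < g y)⟩ | ⟨hyN, (hy : g y = t₀)⟩)
            exacts [⟨hyN, show t₀ ≤ g y from hy.le⟩, ⟨hyN, show t₀ ≤ g y from hy.ge⟩]
        have hxle : x ≤ μ (N ∩ {y | t₀ ≤ g y}) := by
          set sq : ℕ → ℝ≥0∞ := fun n => max (t₀ / 2) (t₀ - ((n : ℝ≥0∞) + 1)⁻¹) with hsq
          have hhalf : t₀ / 2 < t₀ := ENNReal.half_lt_self ht₀0 ht₀top
          have hslt : ∀ n, sq n < t₀ := by
            intro n
            refine max_lt hhalf ?_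
            exact ENNReal.sub_lt_self ht₀top ht₀0
              (ENNReal.inv_ne_zero.2 (ENNReal.add_ne_top.2
                ⟨ENNReal.natCast_ne_top n, ENNReal.one_ne_top⟩))
          have hsx : ∀ n, x < μ (Eset (sq n)) := by
            intro n
            by_contra hle
            push_neg at hle
            exact absurd (sInf_le (show sq n ∈ S from hle)) (not_le.2 (hslt n))
          have hsmono : Monotone sq := by
            intro m n hmn
            refine max_le_max le_rfl (tsub_le_tsub_left ?_ t₀)
            exact ENNReal.inv_le_inv.2 (add_le_add_left (by exact_mod_cast hmn) 1)
          have hanti : Antitone fun n => Eset (sq n) := fun m n hmn => hEmono (hsmono hmn)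
          have hint : ⋂ n, Eset (sq n) = N ∩ {y | t₀ ≤ g y} := by
            apply Subset.antisymm
            · intro y hy
              have hyN : y ∈ N := (mem_iInter.1 hy 0).1
              refine ⟨hyN, show t₀ ≤ g y from ?_⟩
              by_contra hlt
              push_neg at hlt
              have hd0 : t₀ - g y ≠ 0 := (tsub_pos_of_lt hlt).ne'
              obtain ⟨n, hn⟩ := ENNReal.exists_inv_nat_lt hd0
              have h1 : ((n : ℝ≥0∞) + 1)⁻¹ < t₀ - g y :=
                lt_of_le_of_lt (ENNReal.inv_le_inv.2 le_self_add) hn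
              have h2 : g y < t₀ - ((n : ℝ≥0∞) + 1)⁻¹ := by
                rw [lt_tsub_iff_right]
                rwa [lt_tsub_iff_left] at h1
              have h4 : sq n < g y := (mem_iInter.1 hy n).2
              exact absurd (h2.trans_le (le_max_right _ _)) (not_lt.2 h4.le)
            · intro y hy
              refine mem_iInter.2 fun n =>
                ⟨hy.1, show sq n < g y from
                  lt_of_lt_of_le (hslt n) (show t₀ ≤ g y from hy.2)⟩
          have hfin : μ (Eset (sq 0)) ≠ ∞ := by
            refine hMarkov (sq 0) ?_ (ne_top_of_lt ((hslt 0).trans (lt_top_iff_ne_top.2 ht₀top)))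
            intro h0
            have h1 : t₀ / 2 ≤ sq 0 := le_max_left _ _
            rw [h0] at h1
            have h2 : t₀ / 2 = 0 := le_antisymm h1 zero_le
            exact ht₀0 (by simpa [ENNReal.div_eq_zero_iff] using h2)
          have := Directed.measure_iInter (μ := μ)
            (fun n => (hEm (sq n)).nullMeasurableSet) hanti.directed_ge ⟨0, hfin⟩
          rw [hint] at this
          rw [this]
          exact le_iInf fun n => (hsx n).le
        calc c = x - μ E := rfl
          _ ≤ (μ E + μ L) - μ E := tsub_le_tsub_right
              (hxle.trans ((hELset ▸ measure_union_le E L))) _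
          _ ≤ μ L := by
              rw [add_comm]
              exact tsub_le_iff_right.2 le_rfl
      have hFc : μ F = c := by rw [hFr]; exact min_eq_left hcL
      -- measure inequality by cancellation
      have hμineq : μ (B ∩ L) + μ (B ∩ W) ≤ μ (E \ B) + μ F := by
        have h1 : μ (B ∩ E) + (μ (B ∩ L) + μ (B ∩ W)) ≤ μ (B ∩ E) + (μ (E \ B) + μ F) := by
          calc μ (B ∩ E) + (μ (B ∩ L) + μ (B ∩ W)) = μ B := (hdecomp μ).symm
            _ ≤ x := hBx
            _ = μ E + c := (add_tsub_cancel_of_le hEx).symm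
            _ = (μ (B ∩ E) + μ (E \ B)) + μ F := by rw [← hEdecomp μ, hFc]
            _ = μ (B ∩ E) + (μ (E \ B) + μ F) := add_assoc _ _ _
        have hfin : μ (B ∩ E) ≠ ∞ :=
          ((measure_mono inter_subset_right).trans_lt
            ((hEx.trans_lt (lt_top_iff_ne_top.2 hx)))).ne
        exact ENNReal.le_of_add_le_add_left hfin h1

      calc ν (B ∩ L) + ν (B ∩ W) ≤ t₀ * μ (B ∩ L) + t₀ * μ (B ∩ W) :=
            add_le_add (hνBL.le) hνW
        _ = t₀ * (μ (B ∩ L) + μ (B ∩ W)) := (mul_add _ _ _).symm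
        _ ≤ t₀ * (μ (E \ B) + μ F) := mul_le_mul_right hμineq t₀
        _ = t₀ * μ (E \ B) + t₀ * μ F := mul_add _ _ _
        _ ≤ ν (E \ B) + ν F := add_le_add hνEB hνF.ge
  calc ν B = ν (B ∩ E) + (ν (B ∩ L) + ν (B ∩ W)) := hdecomp ν
    _ ≤ ν (B ∩ E) + (ν (E \ B) + ν F) := add_le_add_right key _
    _ = (ν (B ∩ E) + ν (E \ B)) + ν F := (add_assoc _ _ _).symm
    _ = ν E + ν F := by rw [← hEdecomp ν]
    _ = ν C := (measure_union hdisjEF hFm).symm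

theorem main_opt {μ : Measure Ω} [SigmaFinite μ] {g : Ω → ℝ≥0∞} (hgm : Measurable g)
    (hgi : ∫⁻ x, g x ∂μ ≠ ∞) {K : ℝ≥0∞} (hK : K ≠ ∞) :
    ∃ A, MeasurableSet A ∧ μ A ≤ K ∧
      ∀ B, MeasurableSet B → μ B ≤ K → μ.withDensity g B ≤ μ.withDensity g A := by
  classical
  set ν := μ.withDensity g with hν
  haveI hνfin : IsFiniteMeasure ν := isFiniteMeasure_withDensity hgi
  have hνac : ∀ Z : Set Ω, μ Z = 0 → ν Z = 0 := fun Z hZ =>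
    withDensity_absolutelyContinuous μ g hZ
  obtain ⟨A, hAm, hAdisj, hAatom, hAno⟩ := sigma_decomp μ
  set N := (⋃ i, A i)ᶜ with hNdef
  have hNm : MeasurableSet N := (MeasurableSet.iUnion hAm).compl
  have hAfin : ∀ i, μ (A i) ≠ ∞ := by
    intro i
    rcases hAatom i with h | h
    · rw [h]; simp
    · exact h.lt_top.ne
  -- the partition identity
  have hpart : ∀ (m : Measure Ω) (B : Set Ω), MeasurableSet B →
      m B = (∑' i, m (B ∩ A i)) + m (B ∩ N) := by
    intro m B hB
    have h1 : m (B ∩ ⋃ i, A i) + m (B \ ⋃ i, A i) = m B :=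
      measure_inter_add_diff B (MeasurableSet.iUnion hAm)
    have h2 : B ∩ ⋃ i, A i = ⋃ i, B ∩ A i := inter_iUnion B A
    have h3 : m (⋃ i, B ∩ A i) = ∑' i, m (B ∩ A i) := by
      refine measure_iUnion ?_ (fun i => hB.inter (hAm i))
      intro i j hij
      exact ((hAdisj hij).mono inter_subset_right inter_subset_right)
    rw [← h1, h2, h3, diff_eq]
  -- the atom dichotomy
  have hdich : ∀ i (B : Set Ω), MeasurableSet B →
      μ (B ∩ A i) = μ (A i) ∨ μ (B ∩ A i) = 0 := by
    intro i B hB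
    rcases hAatom i with h | h
    · rw [h]
      simp
    · rcases h.2.2 (B ∩ A i) inter_subset_right (hB.inter (hAm i)) with h' | h'
      exacts [Or.inr h', Or.inl h']
  have hfullν : ∀ i (B : Set Ω), MeasurableSet B → μ (B ∩ A i) = μ (A i) →
      ν (B ∩ A i) = ν (A i) := by
    intro i B hB hfull
    have h1 : μ (A i ∩ B) + μ (A i \ B) = μ (A i) := measure_inter_add_diff (A i) hB
    rw [inter_comm] at h1
    rw [hfull] at h1
    have h2 : μ (A i \ B) = 0 := by
      by_contra hd
      exact absurd h1 (ENNReal.lt_add_right (hAfin i) hd).ne'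
    have h3 : ν (A i ∩ B) + ν (A i \ B) = ν (A i) := measure_inter_add_diff (A i) hB
    rw [hνac _ h2, add_zero, inter_comm] at h3
    exact h3
  -- the sup
  set FS := {v : ℝ≥0∞ | ∃ B, MeasurableSet B ∧ μ B ≤ K ∧ ν B = v} with hFSdef
  set Sv := sSup FS with hSvdef
  have hSvtop : Sv ≠ ∞ := by
    refine (lt_of_le_of_lt (sSup_le ?_) (measure_lt_top ν univ)).ne
    rintro v ⟨B, hBm, hBK, rfl⟩
    exact measure_mono (subset_univ B)
  -- near-optimal sequence
  have hBk : ∀ k : ℕ, ∃ B, MeasurableSet B ∧ μ B ≤ K ∧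
      Sv ≤ ν B + ((k : ℝ≥0∞) + 1)⁻¹ := by
    intro k
    rcases eq_or_ne Sv 0 with h0 | h0
    · exact ⟨∅, MeasurableSet.empty, by simp, by rw [h0]; exact zero_le⟩
    · have hlt : Sv - ((k : ℝ≥0∞) + 1)⁻¹ < Sv := by
        refine ENNReal.sub_lt_self hSvtop h0 ?_
        exact ENNReal.inv_ne_zero.2 (ENNReal.add_ne_top.2
          ⟨ENNReal.natCast_ne_top k, ENNReal.one_ne_top⟩)
      obtain ⟨v, ⟨B, hBm, hBK, rfl⟩, hv⟩ := lt_sSup_iff.1 hlt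
      exact ⟨B, hBm, hBK, tsub_le_iff_right.1 hv.le⟩
  choose Bk hBkm hBkK hBkS using hBk
  -- the ultrafilter
  set U : Ultrafilter ℕ := Ultrafilter.of atTop with hUdef
  have hUat : (U : Filter ℕ) ≤ atTop := Ultrafilter.of_le _
  set Iset : Set ℕ := {i | {k | μ (Bk k ∩ A i) = μ (A i)} ∈ U} with hIdef
  set xk : ℕ → ℝ≥0∞ := fun k => μ (Bk k ∩ N) with hxkdef
  set x : ℝ≥0∞ := (U.map xk).lim with hxdef
  have hxtend : Tendsto xk (U : Filter ℕ) (𝓝 x) := by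
    have h := Ultrafilter.le_nhds_lim (U.map xk)
    rwa [Ultrafilter.coe_map] at h
  have hxK : x ≤ K :=
    le_of_tendsto hxtend (Eventually.of_forall fun k =>
      (measure_mono inter_subset_left).trans (hBkK k))
  have hxtop : x ≠ ∞ := (hxK.trans_lt (lt_top_iff_ne_top.2 hK)).ne
  obtain ⟨C, hCN, hCm, hCx, hCopt⟩ := nonatomic_opt hgm hgi hAno hNm hxtop
  -- construction of the final set
  set A' : ℕ → Set Ω := fun i => if i ∈ Iset then A i else ∅ with hA'def
  have hA'm : ∀ i, MeasurableSet (A' i) := by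
    intro i
    by_cases hi : i ∈ Iset <;> simp [hA'def, hi, hAm i]
  have hA'sub : ∀ i, A' i ⊆ A i := by
    intro i
    by_cases hi : i ∈ Iset <;> simp [hA'def, hi]
  have hA'disj : Pairwise (Function.onFun Disjoint A') := fun i j hij =>
    ((hAdisj hij).mono (hA'sub i) (hA'sub j))
  have hA'μ : ∀ (m : Measure Ω) i, m (A' i) = if i ∈ Iset then m (A i) else 0 := by
    intro m i
    by_cases hi : i ∈ Iset <;> simp [hA'def, hi]
  set Afin : Set Ω := (⋃ i, A' i) ∪ C with hAfindef
  have hAfinm : MeasurableSet Afin := (MeasurableSet.iUnion hA'm).union hCm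
  have hdisjUC : Disjoint (⋃ i, A' i) C := by
    refine Set.disjoint_left.2 fun y hy hyC => ?_
    obtain ⟨i, hi⟩ := mem_iUnion.1 hy
    exact (hCN hyC) (mem_iUnion.2 ⟨i, hA'sub i hi⟩)
  have hAfinmeas : ∀ m : Measure Ω, m Afin = (∑' i, m (A' i)) + m C := by
    intro m
    rw [hAfindef, measure_union hdisjUC hCm, measure_iUnion hA'disj hA'm]
  -- CLAIM 1 : the measure constraint
  have claim1 : (∑' i, μ (A' i)) + x ≤ K := by
    rw [ENNReal.tsum_eq_iSup_sum]
    rw [ENNReal.iSup_add]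
    refine iSup_le fun J => ?_
    refine ENNReal.le_of_forall_pos_le_add fun ε hε hKtop => ?_
    have hεne : ((ε : ℝ≥0∞)) ≠ 0 := by exact_mod_cast hε.ne'
    -- events
    have hEv1 : {k | ∀ i ∈ J, i ∈ Iset → μ (Bk k ∩ A i) = μ (A i)} ∈ U := by
      have : {k | ∀ i ∈ J, i ∈ Iset → μ (Bk k ∩ A i) = μ (A i)} =
          ⋂ i ∈ J, ⋂ (_ : i ∈ Iset), {k | μ (Bk k ∩ A i) = μ (A i)} := by
        ext k
        simp [mem_iInter]
      rw [this]
      refine (Filter.biInter_finset_mem J).2 fun i hi => ?_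
      by_cases hiI : i ∈ Iset
      · have h' : (⋂ (_ : i ∈ Iset), {k | μ (Bk k ∩ A i) = μ (A i)})
            = {k | μ (Bk k ∩ A i) = μ (A i)} := by simp [hiI]
        rw [h']
        exact hiI
      · simp [hiI]
    have hEv2 : {k | xk k ∈ Icc (x - ε) (x + ε)} ∈ U :=
      hxtend (ENNReal.Icc_mem_nhds hxtop hεne)
    obtain ⟨k, hk1, hk2⟩ := Filter.nonempty_of_mem (Filter.inter_mem hEv1 hEv2)
    -- the disjoint pieces inside Bk k
    have hpieces : (∑ i ∈ J, μ (Bk k ∩ A' i)) + μ (Bk k ∩ N) ≤ μ (Bk k) := by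
      have hdisjfam : ∀ i ∈ (J : Set ℕ), ∀ j ∈ (J : Set ℕ), i ≠ j →
          Disjoint (Bk k ∩ A' i) (Bk k ∩ A' j) := fun i _ j _ hij =>
        (hA'disj hij).mono inter_subset_right inter_subset_right
      have h1 : μ (⋃ i ∈ J, Bk k ∩ A' i) = ∑ i ∈ J, μ (Bk k ∩ A' i) :=
        measure_biUnion_finset hdisjfam fun i _ => (hBkm k).inter (hA'm i)
      have h2 : Disjoint (⋃ i ∈ J, Bk k ∩ A' i) (Bk k ∩ N) := by
        refine Set.disjoint_left.2 fun y hy hyN => ?_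
        simp only [mem_iUnion] at hy
        obtain ⟨i, _, hyi⟩ := hy
        exact hyN.2 (mem_iUnion.2 ⟨i, hA'sub i hyi.2⟩)
      have h3 : μ ((⋃ i ∈ J, Bk k ∩ A' i) ∪ (Bk k ∩ N)) =
          (∑ i ∈ J, μ (Bk k ∩ A' i)) + μ (Bk k ∩ N) := by
        rw [measure_union h2 ((hBkm k).inter hNm), h1]
      rw [← h3]
      refine measure_mono ?_
      refine union_subset ?_ inter_subset_left
      exact iUnion_subset fun i => iUnion_subset fun _ => inter_subset_left
    -- value of each piece
    have hpieceval : ∀ i ∈ J, μ (A' i) ≤ μ (Bk k ∩ A' i) := by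
      intro i hi
      by_cases hiI : i ∈ Iset
      · have hfull := hk1 i hi hiI
        have hAeq : A' i = A i := by simp [hA'def, hiI]
        rw [hAeq, hfull]
      · have hAeq : A' i = (∅ : Set Ω) := by simp [hA'def, hiI]
        rw [hAeq]
        simp
    have hxlow : x - ε ≤ μ (Bk k ∩ N) := hk2.1
    have hsum1 : (∑ i ∈ J, μ (A' i)) + (x - ε) ≤ μ (Bk k) := by
      refine le_trans ?_ hpieces
      exact add_le_add (Finset.sum_le_sum hpieceval) hxlow
    have hsum2 : (∑ i ∈ J, μ (A' i)) + (x - ε) ≤ K := hsum1.trans (hBkK k)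
    rcases le_total (ε : ℝ≥0∞) x with hle | hle
    · calc (∑ i ∈ J, μ (A' i)) + x = (∑ i ∈ J, μ (A' i)) + (x - ε) + ε := by
            rw [add_assoc, tsub_add_cancel_of_le hle]
        _ ≤ K + ε := add_le_add_left hsum2 _
    · have hx0' : x - (ε : ℝ≥0∞) = 0 := tsub_eq_zero_of_le hle
      have hsum3 : (∑ i ∈ J, μ (A' i)) ≤ K := by
        rw [hx0', add_zero] at hsum2
        exact hsum2
      exact add_le_add hsum3 hle
  -- tail sets
  set Un : ℕ → Set Ω := fun n => ⋃ i, ⋃ (_ : n ≤ i), A i with hUndef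
  have hUnm : ∀ n, MeasurableSet (Un n) :=
    fun n => MeasurableSet.iUnion fun i => MeasurableSet.iUnion fun _ => hAm i
  have hUnanti : Antitone Un := by
    intro m n hmn
    exact iUnion_mono fun i => iUnion_subset fun h => fun y hy =>
      mem_iUnion.2 ⟨hmn.trans h, hy⟩
  have hUnempty : ⋂ n, Un n = ∅ := by
    refine eq_empty_iff_forall_notMem.2 fun y hy => ?_
    obtain ⟨i₀, hi₀⟩ := mem_iUnion.1 (mem_iInter.1 hy 0)
    obtain ⟨hle, hy0⟩ := mem_iUnion.1 hi₀
    obtain ⟨i₁, hi₁⟩ := mem_iUnion.1 (mem_iInter.1 hy (i₀ + 1))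
    obtain ⟨hle1, hy1⟩ := mem_iUnion.1 hi₁
    have hne : i₀ ≠ i₁ := fun h => by omega
    exact Set.disjoint_left.1 (hAdisj hne) hy0 hy1
  have hUntend : Tendsto (fun n => ν (Un n)) atTop (𝓝 0) := by
    have := tendsto_measure_iInter_atTop (μ := ν)
      (fun n => (hUnm n).nullMeasurableSet) hUnanti ⟨0, measure_ne_top ν _⟩
    rwa [hUnempty, measure_empty] at this
  -- decomposition with head of length n
  have hheaddecomp : ∀ (m : Measure Ω) (B : Set Ω), MeasurableSet B → ∀ n : ℕ,
      m B = (∑ i ∈ Finset.range n, m (B ∩ A i)) + m (B ∩ Un n) + m (B ∩ N) := by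
    intro m B hB n
    have hsplit : (⋃ i, A i) = (⋃ i ∈ Finset.range n, A i) ∪ Un n := by
      ext y
      simp only [mem_union, mem_iUnion, Finset.mem_range, hUndef]
      constructor
      · rintro ⟨i, hi⟩
        rcases lt_or_ge i n with h | h
        exacts [Or.inl ⟨i, h, hi⟩, Or.inr ⟨i, h, hi⟩]
      · rintro (⟨i, _, hi⟩ | ⟨i, _, hi⟩)
        exacts [⟨i, hi⟩, ⟨i, hi⟩]
    have h1 : m (B ∩ ⋃ i, A i) + m (B ∩ N) = m B := by
      have h0 : m (B ∩ ⋃ i, A i) + m (B \ ⋃ i, A i) = m B :=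
        measure_inter_add_diff B (MeasurableSet.iUnion hAm)
      rwa [diff_eq] at h0
    have h2 : B ∩ ⋃ i, A i = (⋃ i ∈ Finset.range n, B ∩ A i) ∪ (B ∩ Un n) := by
      rw [hsplit, inter_union_distrib_left]
      congr 1
      ext y
      simp only [mem_iUnion, mem_inter_iff, Finset.mem_range]
      tauto
    have h3 : Disjoint (⋃ i ∈ Finset.range n, B ∩ A i) (B ∩ Un n) := by
      refine Set.disjoint_left.2 fun y hy hyU => ?_
      simp only [mem_iUnion, Finset.mem_range] at hy
      obtain ⟨i, hin, -, hyA⟩ := hy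
      obtain ⟨j, hj⟩ := mem_iUnion.1 hyU.2
      obtain ⟨hnj, hyj⟩ := mem_iUnion.1 hj
      have hne : i ≠ j := fun h => by omega
      exact Set.disjoint_left.1 (hAdisj hne) hyA hyj
    have h4 : m ((⋃ i ∈ Finset.range n, B ∩ A i) ∪ (B ∩ Un n)) =
        m (⋃ i ∈ Finset.range n, B ∩ A i) + m (B ∩ Un n) :=
      measure_union h3 (hB.inter (hUnm n))
    have h5 : m (⋃ i ∈ Finset.range n, B ∩ A i) = ∑ i ∈ Finset.range n, m (B ∩ A i) :=
      measure_biUnion_finset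
        (fun i _ j _ hij => (hAdisj hij).mono inter_subset_right inter_subset_right)
        (fun i _ => hB.inter (hAm i))
    rw [← h1, h2, h4, h5]
  -- CLAIM 2 : the value bound
  have claim2 : Sv ≤ (∑' i, ν (A' i)) + ν C := by
    refine ENNReal.le_of_forall_pos_le_add fun ε hε _ => ?_
    set ε3 : ℝ≥0∞ := (ε : ℝ≥0∞) / 3 with hε3def
    have hεne : ((ε : ℝ≥0∞)) ≠ 0 := by exact_mod_cast hε.ne'
    have hε3ne : ε3 ≠ 0 := by
      rw [hε3def]
      simp only [ne_eq, ENNReal.div_eq_zero_iff, not_or]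
      exact ⟨hεne, by norm_num⟩
    obtain ⟨δ, hδ0, hδprop⟩ := abscont hgm hgi hε3ne
    -- choose the tail length
    obtain ⟨n, hn⟩ := (hUntend.eventually_lt_const (pos_iff_ne_zero.2 hε3ne)).exists
    -- the events
    have hEi : ∀ i, {k | ν (Bk k ∩ A i) ≤ ν (A' i)} ∈ U := by
      intro i
      by_cases hiI : i ∈ Iset
      · refine univ_mem' fun k => ?_
        have hAA : ν (A' i) = ν (A i) := by simp [hA'def, hiI]
        rw [hAA]
        exact measure_mono inter_subset_right
      · have hcompl : {k | μ (Bk k ∩ A i) = μ (A i)}ᶜ ∈ U :=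
          Ultrafilter.compl_mem_iff_notMem.2 hiI
        refine mem_of_superset hcompl fun k hk => ?_
        have hzero : μ (Bk k ∩ A i) = 0 := by
          rcases hdich i (Bk k) (hBkm k) with h | h
          · exact absurd h hk
          · exact h
        have hA0 : ν (A' i) = 0 := by simp [hA'def, hiI]
        show ν (Bk k ∩ A i) ≤ ν (A' i)
        rw [hA0, hνac _ hzero]
    have hEvn : (⋂ i ∈ Finset.range n, {k | ν (Bk k ∩ A i) ≤ ν (A' i)}) ∈ U :=
      (Filter.biInter_finset_mem _).2 fun i _ => hEi i
    have hG2 : {k | xk k ≤ x + δ} ∈ U := by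
      refine mem_of_superset (hxtend (ENNReal.Icc_mem_nhds hxtop hδ0)) fun k hk => hk.2
    have hG3 : {k : ℕ | ((k : ℝ≥0∞) + 1)⁻¹ ≤ ε3} ∈ U := by
      obtain ⟨m, hm⟩ := ENNReal.exists_inv_nat_lt hε3ne
      refine hUat (mem_atTop_sets.2 ⟨m, fun k hk => ?_⟩)
      refine le_trans (le_trans (ENNReal.inv_le_inv.2 ?_) hm.le) le_rfl
      calc (m : ℝ≥0∞) ≤ (k : ℝ≥0∞) := by exact_mod_cast hk
        _ ≤ (k : ℝ≥0∞) + 1 := le_self_add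
    obtain ⟨k, ⟨hkEvn, hkG2⟩, hkinv⟩ :=
      Filter.nonempty_of_mem (Filter.inter_mem (Filter.inter_mem hEvn hG2) hG3)
    -- head bound
    have hhead : (∑ i ∈ Finset.range n, ν (Bk k ∩ A i)) ≤ ∑' i, ν (A' i) := by
      refine le_trans (Finset.sum_le_sum fun i hi => ?_) (ENNReal.sum_le_tsum _)
      exact Set.mem_iInter₂.1 hkEvn i hi
    -- tail bound
    have htail : ν (Bk k ∩ Un n) ≤ ε3 :=
      le_trans (measure_mono inter_subset_right) hn.le
    -- nonatomic part bound
    have hNpart : ν (Bk k ∩ N) ≤ ν C + ε3 := by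
      have hB'N : Bk k ∩ N ⊆ N := inter_subset_right
      have hB'm : MeasurableSet (Bk k ∩ N) := (hBkm k).inter hNm
      have hB'μ : μ (Bk k ∩ N) ≤ x + δ := hkG2
      by_cases hble : μ (Bk k ∩ N) ≤ x
      · exact le_trans (hCopt _ hB'N hB'm hble) le_self_add
      · push_neg at hble
        obtain ⟨B'', hB''sub, hB''m, hB''x⟩ :=
          sierpinski (hAno.mono hB'N) hB'm hble.le hxtop
        have hd : ν (Bk k ∩ N) = ν B'' + ν ((Bk k ∩ N) \ B'') := by
          rw [← measure_inter_add_diff (Bk k ∩ N) hB''m,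
            inter_eq_self_of_subset_right hB''sub]
        have hμd : μ ((Bk k ∩ N) \ B'') ≤ δ := by
          have h1 : μ B'' + μ ((Bk k ∩ N) \ B'') = μ (Bk k ∩ N) := by
            rw [← measure_inter_add_diff (Bk k ∩ N) hB''m,
              inter_eq_self_of_subset_right hB''sub]
          rw [hB''x] at h1
          have h2 : x + μ ((Bk k ∩ N) \ B'') ≤ x + δ := h1.le.trans hB'μ
          exact ENNReal.le_of_add_le_add_left hxtop h2
        rw [hd]
        exact add_le_add (hCopt B'' (hB''sub.trans hB'N) hB''m (le_of_eq hB''x))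
          (hδprop _ (hB'm.diff hB''m) hμd)
    have hfinal : Sv ≤ ν (Bk k) + ε3 :=
      le_trans (hBkS k) (add_le_add_right hkinv _)
    have hepsum : ε3 + ε3 + ε3 = (ε : ℝ≥0∞) := by
      rw [hε3def, show (ε:ℝ≥0∞)/3 + (ε:ℝ≥0∞)/3 + (ε:ℝ≥0∞)/3 = (ε:ℝ≥0∞)/3 * 3 by ring]
      exact ENNReal.div_mul_cancel (by norm_num) (by norm_num)
    calc Sv ≤ ν (Bk k) + ε3 := hfinal
      _ = (∑ i ∈ Finset.range n, ν (Bk k ∩ A i)) + ν (Bk k ∩ Un n)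
          + ν (Bk k ∩ N) + ε3 := by rw [← hheaddecomp ν (Bk k) (hBkm k) n]
      _ ≤ (∑' i, ν (A' i)) + ε3 + (ν C + ε3) + ε3 := by
          refine add_le_add_left (add_le_add (add_le_add hhead htail) hNpart) ε3
      _ = ((∑' i, ν (A' i)) + ν C) + (ε3 + ε3 + ε3) := by ring
      _ = ((∑' i, ν (A' i)) + ν C) + ε := by rw [hepsum]
  -- conclusion
  refine ⟨Afin, hAfinm, ?_, ?_⟩
  · rw [hAfinmeas μ]
    calc (∑' i, μ (A' i)) + μ C ≤ (∑' i, μ (A' i)) + x := add_le_add_right hCx _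
      _ ≤ K := claim1
  · intro B hBm hBK
    have h1 : ν B ≤ Sv := le_sSup ⟨B, hBm, hBK, rfl⟩
    refine h1.trans ?_
    rw [hAfinmeas ν]
    exact claim2

end Stmt14

/-- for any σ-finite measure space (possibly with atoms), `u ∈ L¹` and
`K ∈ (0, μ(Ω))`, the supremum in the largest-K-norm is attained: there is a measurable
`A` with `μ A ≤ K` and `|u|_K = ∫_A |u| dμ`. -/
theorem stmt14 {Ω : Type*} [MeasurableSpace Ω] (μ : Measure Ω) [SigmaFinite μ]
    (u : Ω → ℝ) (hu : Integrable u μ)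
    (K : ℝ≥0∞) (hK0 : 0 < K) (hK : K < μ Set.univ) :
    ∃ A : Set Ω, MeasurableSet A ∧ μ A ≤ K ∧ largestK μ K u = ∫ x in A, |u x| ∂μ := by
  classical
  set u' : Ω → ℝ := hu.1.mk u with hu'def
  have hu'sm : StronglyMeasurable u' := hu.1.stronglyMeasurable_mk
  have hu'm : Measurable u' := hu'sm.measurable
  have huu' : u =ᵐ[μ] u' := hu.1.ae_eq_mk
  have hu'int : Integrable u' μ := hu.congr huu'
  set g : Ω → ℝ≥0∞ := fun y => ENNReal.ofReal |u' y| with hgdef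
  have hgm : Measurable g := hu'm.abs.ennreal_ofReal
  have hgnorm : ∀ y, g y = (‖u' y‖₊ : ℝ≥0∞) := by
    intro y
    simp only [hgdef, ← Real.norm_eq_abs, ofReal_norm, enorm_eq_nnnorm]
  have hgi : ∫⁻ y, g y ∂μ ≠ ∞ := by
    have h1 : ∫⁻ y, g y ∂μ = ∫⁻ y, (‖u' y‖₊ : ℝ≥0∞) ∂μ := by
      exact lintegral_congr fun y => hgnorm y
    rw [h1]
    exact hu'int.2.ne
  set ν := μ.withDensity g with hν
  haveI hνfin : IsFiniteMeasure ν := isFiniteMeasure_withDensity hgi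
  have hint : ∀ B : Set Ω, MeasurableSet B → ∫ x in B, |u x| ∂μ = (ν B).toReal := by
    intro B hBm
    have h1 : ∫ x in B, |u x| ∂μ = ∫ x in B, |u' x| ∂μ := by
      refine integral_congr_ae (ae_restrict_of_ae ?_)
      exact huu'.fun_comp abs
    have h2 : ∫ x in B, |u' x| ∂μ = (∫⁻ x in B, ENNReal.ofReal |u' x| ∂μ).toReal := by
      refine integral_eq_lintegral_of_nonneg_ae (ae_of_all _ fun y => abs_nonneg _) ?_
      exact (hu'm.abs).stronglyMeasurable.aestronglyMeasurable
    have h3 : ν B = ∫⁻ x in B, g x ∂μ := withDensity_apply g hBm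
    rw [h1, h2, h3]
  obtain ⟨A, hAm, hAK, hopt⟩ := Stmt14.main_opt hgm hgi (ne_top_of_lt hK)
  refine ⟨A, hAm, hAK, ?_⟩
  have hgreatest : IsGreatest
      {r : ℝ | ∃ B : Set Ω, MeasurableSet B ∧ μ B ≤ K ∧ r = ∫ x in B, |u x| ∂μ}
      (∫ x in A, |u x| ∂μ) := by
    constructor
    · exact ⟨A, hAm, hAK, rfl⟩
    · rintro r ⟨B, hBm, hBK, rfl⟩
      rw [hint B hBm, hint A hAm]
      exact ENNReal.toReal_le_toReal (measure_ne_top ν B) (measure_ne_top ν A)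
        |>.2 (hopt B hBm hBK)
  exact hgreatest.csSup_eq
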